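/- For 1 ≤ p < ∞, α ∈ (0,1), and the Tail Value-at-Risk acceptance set A^α = {X ∈ L^p : TVaR_α(X) ≤ 0}, the following are equivalent for a traded asset S = (S_0, S_T) with S_T ∈ L^p_+ nonzero: (a) ρ_{A^α,S} is finitely valued on L^p; (b) ρ_{A^α,S} is Lipschitz continuous on L^p; (c) TVaR_α(S_T) < 0; (d) P(S_T = 0) < α. -/

import Mathlib

open MeasureTheory Filter Topology ENNReal

open Set

set_option linter.unusedSectionVars false

section Core
variable {Ω : Type*} [MeasureSpace Ω] [IsProbabilityMeasure (volume : Measure Ω)]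

noncomputable def Gd (f : Ω → ℝ) (t : ℝ) : ℝ≥0∞ := volume {ω | f ω < t}

noncomputable def Hd (f : Ω → ℝ) (t : ℝ) : ℝ≥0∞ := volume {ω | f ω ≤ t}

noncomputable def qf (f : Ω → ℝ) (β : ℝ) : ℝ := sSup {t | Gd f t ≤ ENNReal.ofReal β}

noncomputable def varF (f : Ω → ℝ) (β : ℝ) : ℝ :=
  sInf {m : ℝ | volume {ω | f ω + m < 0} ≤ ENNReal.ofReal β}

theorem varF_eq_neg_qf (f : Ω → ℝ) (β : ℝ) : varF f β = - qf f β := by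
  have hset : (-{m : ℝ | volume {ω | f ω + m < 0} ≤ ENNReal.ofReal β}) =
      {t | Gd f t ≤ ENNReal.ofReal β} := by
    ext t
    simp only [Set.mem_neg, Set.mem_setOf_eq, Gd]
    have : {ω | f ω + -t < 0} = {ω | f ω < t} := by
      ext ω; constructor <;> intro h <;> simp at * <;> linarith
    rw [this]
  rw [varF, Real.sInf_def, hset, qf]

theorem varF_congr_ae {f g : Ω → ℝ} (h : f =ᵐ[(volume : Measure Ω)] g) (β : ℝ) :
    varF f β = varF g β := by
  unfold varF
  congr 1
  ext m
  simp only [Set.mem_setOf_eq]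
  have : volume {ω | f ω + m < 0} = volume {ω | g ω + m < 0} := by
    apply measure_congr
    filter_upwards [h] with ω hω
    show (f ω + m < 0) = (g ω + m < 0)
    rw [hω]
  rw [this]

theorem Gd_mono (f : Ω → ℝ) : Monotone (Gd f) := fun s t hst =>
  measure_mono (fun ω (h : f ω < s) => lt_of_lt_of_le h hst)

variable {f : Ω → ℝ} (hf : Measurable f)

include hf

theorem Gd_meas (t : ℝ) : MeasurableSet {ω | f ω < t} := measurableSet_lt hf measurable_const

theorem Hd_meas (t : ℝ) : MeasurableSet {ω | f ω ≤ t} := measurableSet_le hf measurable_const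

theorem Eq_meas (t : ℝ) : MeasurableSet {ω | f ω = t} :=
  measurableSet_eq_fun hf measurable_const

theorem exists_Gd_le {b : ℝ≥0∞} (hb : 0 < b) : ∃ t, Gd f t ≤ b := by
  have h1 : (⋂ n : ℕ, {ω | f ω < -(n : ℝ)}) = ∅ := by
    ext ω
    simp only [Set.mem_iInter, Set.mem_setOf_eq, Set.mem_empty_iff_false, iff_false, not_forall,
      not_lt]
    obtain ⟨n, hn⟩ := exists_nat_ge (-f ω)
    exact ⟨n, by linarith⟩
  have h2 : (volume : Measure Ω) (⋂ n : ℕ, {ω | f ω < -(n : ℝ)}) =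
      ⨅ n : ℕ, (volume : Measure Ω) {ω | f ω < -(n : ℝ)} := by
    refine Directed.measure_iInter (fun n => (Gd_meas hf _).nullMeasurableSet) ?_
      ⟨0, measure_ne_top _ _⟩
    intro m n
    refine ⟨max m n, fun ω (h : f ω < -((max m n : ℕ) : ℝ)) => lt_of_lt_of_le h ?_,
      fun ω (h : f ω < -((max m n : ℕ) : ℝ)) => lt_of_lt_of_le h ?_⟩ <;>
      · simp only [neg_le_neg_iff, Nat.cast_le, Nat.cast_max]
        simp [le_max_left, le_max_right]
  rw [h1, measure_empty] at h2
  by_contra hcon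
  push_neg at hcon
  have : b ≤ ⨅ n : ℕ, (volume : Measure Ω) {ω | f ω < -(n : ℝ)} :=
    le_iInf fun n => (hcon _).le
  rw [← h2] at this
  exact absurd (lt_of_le_of_lt this hb) (lt_irrefl _)

omit hf in
theorem exists_lt_Gd {b : ℝ≥0∞} (hb : b < 1) : ∃ t, b < Gd f t := by
  have h1 : (⋃ n : ℕ, {ω | f ω < (n : ℝ)}) = Set.univ := by
    ext ω
    simp only [Set.mem_iUnion, Set.mem_setOf_eq, Set.mem_univ, iff_true]
    obtain ⟨n, hn⟩ := exists_nat_gt (f ω)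
    exact ⟨n, hn⟩
  have h2 : (volume : Measure Ω) (⋃ n : ℕ, {ω | f ω < (n : ℝ)}) =
      ⨆ n : ℕ, (volume : Measure Ω) {ω | f ω < (n : ℝ)} := by
    refine Directed.measure_iUnion ?_
    intro m n
    refine ⟨max m n, fun ω (h : f ω < _) => lt_of_lt_of_le h (by simp), fun ω (h : f ω < _) =>
      lt_of_lt_of_le h (by simp)⟩
  rw [h1, measure_univ] at h2
  by_contra hcon
  push_neg at hcon
  have : (1 : ℝ≥0∞) ≤ b := h2 ▸ iSup_le fun n => hcon _
  exact absurd (lt_of_le_of_lt this hb) (lt_irrefl _)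

omit hf in
theorem qf_bddAbove {β : ℝ} (hβ1 : β < 1) :
    BddAbove {t | Gd f t ≤ ENNReal.ofReal β} := by
  obtain ⟨t₀, ht₀⟩ := exists_lt_Gd (f := f) (ENNReal.ofReal_lt_one.2 hβ1)
  refine ⟨t₀, fun s hs => ?_⟩
  by_contra hcon
  push_neg at hcon
  exact absurd (lt_of_lt_of_le ht₀ (le_trans (Gd_mono f hcon.le) hs)) (lt_irrefl _)

theorem qf_nonempty {β : ℝ} (hβ : 0 < β) :
    Set.Nonempty {t | Gd f t ≤ ENNReal.ofReal β} := by
  obtain ⟨t, ht⟩ := exists_Gd_le hf (ENNReal.ofReal_pos.2 hβ)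
  exact ⟨t, ht⟩

/-- Galois: `t ≤ qf f β ↔ Gd f t ≤ ofReal β` for `β ∈ (0,1)`. -/
theorem le_qf_iff {β t : ℝ} (hβ : 0 < β) (hβ1 : β < 1) :
    t ≤ qf f β ↔ Gd f t ≤ ENNReal.ofReal β := by
  constructor
  · intro ht
    -- left continuity of Gd
    have hU : {ω | f ω < t} = ⋃ n : ℕ, {ω | f ω < t - 1/(n+1)} := by
      ext ω
      simp only [Set.mem_setOf_eq, Set.mem_iUnion]
      constructor
      · intro h
        obtain ⟨n, hn⟩ := exists_nat_one_div_lt (show 0 < t - f ω by linarith)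
        exact ⟨n, by push_cast at hn ⊢; linarith⟩
      · rintro ⟨n, hn⟩
        have : (0:ℝ) < 1/(n+1) := by positivity
        linarith
    have hmeas : (volume : Measure Ω) {ω | f ω < t} =
        ⨆ n : ℕ, (volume : Measure Ω) {ω | f ω < t - 1/(n+1)} := by
      rw [hU]
      refine Directed.measure_iUnion ?_
      intro m n
      refine ⟨max m n, fun ω (h : f ω < _) => lt_of_lt_of_le h ?_, fun ω (h : f ω < _) =>
        lt_of_lt_of_le h ?_⟩ <;>
      · apply sub_le_sub_left
        apply one_div_le_one_div_of_le (by positivity)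
        push_cast
        simp [le_max_left, le_max_right]
    show Gd f t ≤ _
    unfold Gd
    rw [hmeas]
    refine iSup_le fun n => ?_
    -- t - 1/(n+1) < t ≤ sSup, so there is u in the set above t - 1/(n+1)
    have h1 : (0:ℝ) < 1/(n+1) := by positivity
    obtain ⟨u, hu, hu2⟩ := exists_lt_of_lt_csSup (qf_nonempty hf hβ)
      (show t - 1/(n+1) < qf f β by linarith)
    exact le_trans (Gd_mono f hu2.le) hu
  · intro h
    exact le_csSup (qf_bddAbove hβ1) h

theorem qf_lt_iff {β t : ℝ} (hβ : 0 < β) (hβ1 : β < 1) :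
    qf f β < t ↔ ENNReal.ofReal β < Gd f t := by
  rw [← not_le, ← not_le, le_qf_iff hf hβ hβ1]

theorem qf_monoOn {β γ : ℝ} (hβ : 0 < β) (hβγ : β ≤ γ) (hγ1 : γ < 1) : qf f β ≤ qf f γ := by
  have hβ1 : β < 1 := lt_of_le_of_lt hβγ hγ1
  exact (le_qf_iff hf (lt_of_lt_of_le hβ hβγ) hγ1).2
    (le_trans ((le_qf_iff hf hβ hβ1).1 le_rfl) (ENNReal.ofReal_le_ofReal hβγ))

end Core

section Ident
variable {Ω : Type*} [MeasureSpace Ω] [IsProbabilityMeasure (volume : Measure Ω)]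

noncomputable def ccD (f : Ω → ℝ) (α : ℝ) : ℝ≥0∞ :=
  (ENNReal.ofReal α - Gd f (qf f α)) / volume {ω | f ω = qf f α}

noncomputable def Zcan (f : Ω → ℝ) (α : ℝ) : Ω → ℝ := fun ω =>
  if f ω < qf f α then 1 else if f ω = qf f α then (ccD f α).toReal else 0

noncomputable def nuM (f : Ω → ℝ) (α : ℝ) : Measure Ω :=
  (volume : Measure Ω).withDensity (fun ω => ENNReal.ofReal (Zcan f α ω))

variable {f : Ω → ℝ} (hf : Measurable f) {α : ℝ} (hα : 0 < α) (hα1 : α < 1)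
include hf hα hα1

theorem Gv_le : Gd f (qf f α) ≤ ENNReal.ofReal α := (le_qf_iff hf hα hα1).1 le_rfl

theorem ofReal_le_Hv : ENNReal.ofReal α ≤ Hd f (qf f α) := by
  set v := qf f α with hv
  have hI : {ω | f ω ≤ v} = ⋂ n : ℕ, {ω | f ω < v + 1/(n+1)} := by
    ext ω
    simp only [Set.mem_setOf_eq, Set.mem_iInter]
    constructor
    · intro h n
      have : (0:ℝ) < 1/(n+1) := by positivity
      linarith
    · intro h
      by_contra hcon
      push_neg at hcon
      obtain ⟨n, hn⟩ := exists_nat_one_div_lt (show 0 < f ω - v by linarith)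
      have := h n
      linarith
  have hm : Hd f v = ⨅ n : ℕ, Gd f (v + 1/(n+1)) := by
    unfold Hd Gd
    rw [hI]
    refine Directed.measure_iInter (fun n => (Gd_meas hf _).nullMeasurableSet) ?_
      ⟨0, measure_ne_top _ _⟩
    intro m n
    refine ⟨max m n, fun ω (h : f ω < _) => lt_of_lt_of_le h ?_, fun ω (h : f ω < _) =>
      lt_of_lt_of_le h ?_⟩ <;>
    · apply add_le_add_right
      apply one_div_le_one_div_of_le (by positivity)
      push_cast
      simp [le_max_left, le_max_right]
  rw [hm]
  refine le_iInf fun n => ?_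
  have h1 : (0:ℝ) < 1/(n+1) := by positivity
  exact ((qf_lt_iff hf hα hα1).1 (by linarith)).le

theorem disj_lt_eq : Disjoint {ω | f ω < qf f α} {ω | f ω = qf f α} := by
  rw [Set.disjoint_iff]
  rintro ω ⟨h1, h2⟩
  simp only [Set.mem_setOf_eq] at h1 h2
  exact absurd (h2 ▸ h1) (lt_irrefl _)

theorem le_split : {ω | f ω ≤ qf f α} = {ω | f ω < qf f α} ∪ {ω | f ω = qf f α} := by
  ext ω
  simp only [Set.mem_union, Set.mem_setOf_eq]
  constructor
  · intro h; exact lt_or_eq_of_le h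
  · rintro (h | h); exacts [h.le, h.le]

theorem Hv_split : Hd f (qf f α) = Gd f (qf f α) + volume {ω | f ω = qf f α} := by
  unfold Hd Gd
  rw [le_split hf hα hα1, measure_union (disj_lt_eq hf hα hα1) (Eq_meas hf _)]

theorem N_le_D : ENNReal.ofReal α - Gd f (qf f α) ≤ volume {ω | f ω = qf f α} := by
  rw [tsub_le_iff_left]
  calc ENNReal.ofReal α ≤ Hd f (qf f α) := ofReal_le_Hv hf hα hα1
  _ = _ := by rw [Hv_split hf hα hα1, add_comm]

theorem ccD_le_one : ccD f α ≤ 1 := by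
  apply ENNReal.div_le_of_le_mul
  rw [one_mul]
  exact N_le_D hf hα hα1

theorem Zcan_mem (ω : Ω) : Zcan f α ω ∈ Set.Icc (0:ℝ) 1 := by
  unfold Zcan
  split_ifs with h1 h2
  · exact ⟨zero_le_one, le_rfl⟩
  · constructor
    · exact ENNReal.toReal_nonneg
    · exact ENNReal.toReal_le_of_le_ofReal zero_le_one (by simpa using ccD_le_one hf hα hα1)
  · exact ⟨le_rfl, zero_le_one⟩

theorem Zcan_meas : Measurable (Zcan f α) := by
  unfold Zcan
  exact Measurable.ite (Gd_meas hf _) measurable_const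
    (Measurable.ite (hf (measurableSet_singleton _)) measurable_const measurable_const)

theorem nuM_lt : nuM f α {ω | f ω < qf f α} = Gd f (qf f α) := by
  unfold nuM
  rw [withDensity_apply _ (Gd_meas hf _)]
  rw [setLIntegral_congr_fun (g := fun _ => (1:ℝ≥0∞)) (Gd_meas hf _) ((fun ω hω => by
    simp only [Set.mem_setOf_eq] at hω
    unfold Zcan
    rw [if_pos hω, ENNReal.ofReal_one]))]
  rw [setLIntegral_const, one_mul]
  rfl

theorem nuM_eq : nuM f α {ω | f ω = qf f α} = ENNReal.ofReal α - Gd f (qf f α) := by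
  unfold nuM
  rw [withDensity_apply _ (Eq_meas hf _)]
  rw [setLIntegral_congr_fun (g := fun _ => ENNReal.ofReal (ccD f α).toReal) (Eq_meas hf _)
    ((fun ω hω => by
      simp only [Set.mem_setOf_eq] at hω
      unfold Zcan
      rw [if_neg (by rw [hω]; exact lt_irrefl _), if_pos hω]))]
  rw [setLIntegral_const]
  have hcc : ENNReal.ofReal (ccD f α).toReal = ccD f α :=
    ENNReal.ofReal_toReal (lt_of_le_of_lt (ccD_le_one hf hα hα1) one_lt_top).ne
  rw [hcc]
  unfold ccD
  rcases eq_or_ne (volume {ω | f ω = qf f α}) 0 with hD | hD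
  · rw [hD, mul_zero]
    have := N_le_D hf hα hα1
    rw [hD] at this
    exact (le_antisymm this zero_le).symm ▸ rfl
  · rw [ENNReal.div_mul_cancel hD (measure_ne_top _ _)]

theorem nuM_gt : nuM f α {ω | qf f α < f ω} = 0 := by
  unfold nuM
  rw [withDensity_apply _ (measurableSet_lt measurable_const hf)]
  rw [setLIntegral_congr_fun (g := fun _ => (0:ℝ≥0∞)) (measurableSet_lt measurable_const hf)
    ((fun ω hω => by
      simp only [Set.mem_setOf_eq] at hω
      unfold Zcan
      rw [if_neg (by linarith), if_neg (by linarith), ENNReal.ofReal_zero]))]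
  simp

theorem nuM_univ : nuM f α Set.univ = ENNReal.ofReal α := by
  have hsplit : (Set.univ : Set Ω) = {ω | f ω ≤ qf f α} ∪ {ω | qf f α < f ω} := by
    ext ω; simp [le_or_gt]
  have hd2 : Disjoint {ω | f ω ≤ qf f α} {ω | qf f α < f ω} := by
    rw [Set.disjoint_iff]
    rintro ω ⟨h1, h2⟩
    simp only [Set.mem_setOf_eq] at h1 h2
    linarith
  rw [hsplit, measure_union hd2 (measurableSet_lt measurable_const hf), le_split hf hα hα1,
    measure_union (disj_lt_eq hf hα hα1) (Eq_meas hf _), nuM_lt hf hα hα1, nuM_eq hf hα hα1,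
    nuM_gt hf hα hα1, add_zero, add_tsub_cancel_of_le (Gv_le hf hα hα1)]

theorem nuM_le : nuM f α ≤ (volume : Measure Ω) := by
  unfold nuM
  calc (volume : Measure Ω).withDensity (fun ω => ENNReal.ofReal (Zcan f α ω))
      ≤ (volume : Measure Ω).withDensity 1 := by
        apply withDensity_mono
        apply ae_of_all
        intro ω
        exact ENNReal.ofReal_le_one.2 (Zcan_mem hf hα hα1 ω).2
  _ = volume := withDensity_one

theorem nuM_Iic (t : ℝ) : nuM f α {ω | f ω ≤ t} = min (Hd f t) (ENNReal.ofReal α) := by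
  rcases lt_or_ge t (qf f α) with h | h
  · have hsub : {ω | f ω ≤ t} ⊆ {ω | f ω < qf f α} := fun ω hω =>
      lt_of_le_of_lt hω h
    have h1 : nuM f α {ω | f ω ≤ t} = volume {ω | f ω ≤ t} := by
      unfold nuM
      rw [withDensity_apply _ (Hd_meas hf _)]
      rw [setLIntegral_congr_fun (g := fun _ => (1:ℝ≥0∞)) (Hd_meas hf _)
        ((fun ω hω => by
          have hlt : f ω < qf f α := hsub hω
          unfold Zcan
          rw [if_pos hlt, ENNReal.ofReal_one]))]
      rw [setLIntegral_const, one_mul]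
    rw [h1, min_eq_left]
    · rfl
    · calc Hd f t ≤ Gd f (qf f α) := measure_mono hsub
      _ ≤ ENNReal.ofReal α := Gv_le hf hα hα1
  · have hge : ENNReal.ofReal α ≤ Hd f t :=
      le_trans (ofReal_le_Hv hf hα hα1) (measure_mono (fun ω hω => le_trans hω h))
    rw [min_eq_right hge]
    have hzero : nuM f α {ω | t < f ω} = 0 := by
      apply le_antisymm _ zero_le
      rw [← nuM_gt hf hα hα1]
      exact measure_mono (fun ω hω => lt_of_le_of_lt h hω)
    have hdisj : Disjoint {ω | f ω ≤ t} {ω | t < f ω} := by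
      rw [Set.disjoint_iff]
      rintro ω ⟨h1, h2⟩
      simp only [Set.mem_setOf_eq] at h1 h2
      linarith
    have := measure_union (μ := nuM f α) hdisj (measurableSet_lt measurable_const hf)
    have hcup : {ω | f ω ≤ t} ∪ {ω | t < f ω} = Set.univ := by ext ω; simp [le_or_gt]
    rw [hcup] at this
    rw [← nuM_univ hf hα hα1, this, hzero, add_zero]

end Ident

noncomputable def QQ {Ω : Type*} [MeasureSpace Ω] (f : Ω → ℝ) (α : ℝ) : ℝ → ℝ := fun β =>
  if 0 < β then qf f (min β α) else qf f α
section MapSide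
variable {Ω : Type*} [MeasureSpace Ω] [IsProbabilityMeasure (volume : Measure Ω)]
variable {f : Ω → ℝ} (hf : Measurable f)

include hf

theorem ofReal_lt_Hd_imp_qf_le {β t : ℝ} (hβ : 0 < β)
    (h : ENNReal.ofReal β < Hd f t) : qf f β ≤ t := by
  by_contra hcon
  push_neg at hcon
  obtain ⟨u, hu, htu⟩ := exists_lt_of_lt_csSup (qf_nonempty hf hβ) hcon
  have hle : Hd f t ≤ Gd f u := measure_mono (fun ω hω => lt_of_le_of_lt hω htu)
  exact absurd (lt_of_lt_of_le h (hle.trans hu)) (lt_irrefl _)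

theorem Hd_eq_iInf (t : ℝ) : Hd f t = ⨅ n : ℕ, Gd f (t + 1/(n+1)) := by
  have hI : {ω | f ω ≤ t} = ⋂ n : ℕ, {ω | f ω < t + 1/(n+1)} := by
    ext ω
    simp only [Set.mem_setOf_eq, Set.mem_iInter]
    constructor
    · intro h n
      have : (0:ℝ) < 1/(n+1) := by positivity
      linarith
    · intro h
      by_contra hcon
      push_neg at hcon
      obtain ⟨n, hn⟩ := exists_nat_one_div_lt (show 0 < f ω - t by linarith)
      have := h n
      linarith
  unfold Hd Gd
  rw [hI]
  refine Directed.measure_iInter (fun n => (Gd_meas hf _).nullMeasurableSet) ?_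
    ⟨0, measure_ne_top _ _⟩
  intro m n
  refine ⟨max m n, fun ω (h : f ω < _) => lt_of_lt_of_le h ?_, fun ω (h : f ω < _) =>
    lt_of_lt_of_le h ?_⟩ <;>
  · apply add_le_add_right
    apply one_div_le_one_div_of_le (by positivity)
    push_cast
    simp [le_max_left, le_max_right]

theorem qf_le_imp_ofReal_le {β t : ℝ} (hβ1 : β < 1) (h : qf f β ≤ t) :
    ENNReal.ofReal β ≤ Hd f t := by
  have key : ∀ n : ℕ, ENNReal.ofReal β ≤ Gd f (t + 1/(n+1)) := fun n => by
    by_contra hcon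
    push_neg at hcon
    have h2 : t + 1/(n+1) ≤ qf f β := le_csSup (qf_bddAbove hβ1) hcon.le
    have h1 : (0:ℝ) < 1/(n+1) := by positivity
    linarith
  rw [Hd_eq_iInf hf]
  exact le_iInf key

variable {α : ℝ} (hα : 0 < α) (hα1 : α < 1)
include hα hα1

theorem QQ_eq {β : ℝ} (h0 : 0 < β) (h1 : β ≤ α) : QQ f α β = qf f β := by
  unfold QQ
  rw [if_pos h0, min_eq_left h1]

theorem QQ_meas : Measurable (QQ f α) := by
  apply measurable_of_Iic
  intro t
  have hset : QQ f α ⁻¹' Set.Iic t =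
      {β | 0 < β ∧ qf f (min β α) ≤ t} ∪ {β | ¬0 < β ∧ qf f α ≤ t} := by
    ext β
    unfold QQ
    by_cases h : 0 < β <;> simp [h, not_lt.1]
  rw [hset]
  apply MeasurableSet.union
  · apply Set.OrdConnected.measurableSet
    constructor
    rintro x ⟨hx0, hxt⟩ z ⟨hz0, hzt⟩ y ⟨hxy, hyz⟩
    refine ⟨lt_of_lt_of_le hx0 hxy, le_trans ?_ hzt⟩
    exact qf_monoOn hf (lt_min (lt_of_lt_of_le hx0 hxy) hα) (min_le_min hyz le_rfl)
      (lt_of_le_of_lt (min_le_right _ _) hα1)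
  · by_cases h : qf f α ≤ t
    · have heq : {β : ℝ | ¬0 < β ∧ qf f α ≤ t} = Set.Iic 0 := by
        ext β; simp [h, not_lt]
      rw [heq]; exact measurableSet_Iic
    · have heq : {β : ℝ | ¬0 < β ∧ qf f α ≤ t} = ∅ := by
        ext β; simp [h]
      rw [heq]; exact MeasurableSet.empty

theorem map_QQ_eq :
    ((volume : Measure ℝ).restrict (Set.Ioo 0 α)).map (QQ f α) = (nuM f α).map f := by
  haveI hfin1 : IsFiniteMeasure ((volume : Measure ℝ).restrict (Set.Ioo 0 α)) :=
    ⟨by rw [Measure.restrict_apply_univ]; simp [Real.volume_Ioo]⟩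
  haveI hfin2 : IsFiniteMeasure (nuM f α) :=
    ⟨by rw [nuM_univ hf hα hα1]; exact ENNReal.ofReal_lt_top⟩
  haveI hfin3 : IsFiniteMeasure (((volume : Measure ℝ).restrict (Set.Ioo 0 α)).map (QQ f α)) :=
    ⟨by rw [Measure.map_apply (QQ_meas hf hα hα1) MeasurableSet.univ, Set.preimage_univ]
        exact measure_lt_top _ _⟩
  refine Measure.ext_of_Iic _ _ (fun t => ?_)
  rw [Measure.map_apply (QQ_meas hf hα hα1) measurableSet_Iic,
    Measure.map_apply hf measurableSet_Iic]
  have hRHS : nuM f α (f ⁻¹' Set.Iic t) = min (Hd f t) (ENNReal.ofReal α) :=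
    nuM_Iic hf hα hα1 t
  rw [hRHS]
  have hHne : Hd f t ≠ ∞ := measure_ne_top _ _
  set h : ℝ := (Hd f t).toReal with hh
  have hh0 : 0 ≤ h := ENNReal.toReal_nonneg
  -- lower bound set
  have hlow : Set.Ioo 0 (min α h) ⊆ QQ f α ⁻¹' Set.Iic t ∩ Set.Ioo 0 α := by
    rintro β ⟨hβ0, hβm⟩
    have hβα : β < α := lt_of_lt_of_le hβm (min_le_left _ _)
    have hβh : β < h := lt_of_lt_of_le hβm (min_le_right _ _)
    have hβH : ENNReal.ofReal β < Hd f t := (ENNReal.ofReal_lt_iff_lt_toReal hβ0.le hHne).2 hβh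
    refine ⟨?_, hβ0, hβα⟩
    simp only [Set.mem_preimage, Set.mem_Iic]
    rw [QQ_eq hf hα hα1 hβ0 hβα.le]
    exact ofReal_lt_Hd_imp_qf_le hf hβ0 hβH
  have hup : QQ f α ⁻¹' Set.Iic t ∩ Set.Ioo 0 α ⊆ Set.Ioo 0 (min α h) ∪ {h} := by
    rintro β ⟨hβt, hβ0, hβα⟩
    simp only [Set.mem_preimage, Set.mem_Iic] at hβt
    rw [QQ_eq hf hα hα1 hβ0 hβα.le] at hβt
    have hβH : ENNReal.ofReal β ≤ Hd f t :=
      qf_le_imp_ofReal_le hf (lt_trans hβα hα1) hβt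
    have hβh : β ≤ h := by
      rw [← ENNReal.ofReal_le_iff_le_toReal hHne] at *
      · exact hβH
    rcases lt_or_eq_of_le hβh with hlt | heq
    · exact Or.inl ⟨hβ0, lt_min hβα hlt⟩
    · exact Or.inr (by simp [heq])
  have hmeasS : MeasurableSet (QQ f α ⁻¹' Set.Iic t) := QQ_meas hf hα hα1 measurableSet_Iic
  rw [Measure.restrict_apply hmeasS]
  have hval : volume (QQ f α ⁻¹' Set.Iic t ∩ Set.Ioo 0 α) = ENNReal.ofReal (min α h) := by
    apply le_antisymm
    · calc volume (QQ f α ⁻¹' Set.Iic t ∩ Set.Ioo 0 α)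
          ≤ volume (Set.Ioo 0 (min α h) ∪ {h}) := measure_mono hup
      _ ≤ volume (Set.Ioo 0 (min α h)) + volume ({h} : Set ℝ) := measure_union_le _ _
      _ = ENNReal.ofReal (min α h) := by simp [Real.volume_Ioo, Real.volume_singleton]
    · calc ENNReal.ofReal (min α h) = volume (Set.Ioo 0 (min α h)) := by simp [Real.volume_Ioo]
      _ ≤ _ := measure_mono hlow
  rw [hval]
  have : ENNReal.ofReal (min α h) = min (ENNReal.ofReal α) (ENNReal.ofReal h) :=
    Monotone.map_min (fun a b hab => ENNReal.ofReal_le_ofReal hab)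
  rw [this, ENNReal.ofReal_toReal hHne, min_comm]

end MapSide
section Rep
variable {Ω : Type*} [MeasureSpace Ω] [IsProbabilityMeasure (volume : Measure Ω)]
variable {f : Ω → ℝ} (hf : Measurable f) (hfi : Integrable f (volume : Measure Ω))
variable {α : ℝ} (hα : 0 < α) (hα1 : α < 1)

include hf hα hα1

theorem integral_Zcan : ∫ ω, Zcan f α ω ∂(volume : Measure Ω) = α := by
  rw [integral_eq_lintegral_of_nonneg_ae (ae_of_all _ fun ω => (Zcan_mem hf hα hα1 ω).1)
    (Zcan_meas hf hα hα1).aestronglyMeasurable]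
  have : ∫⁻ ω, ENNReal.ofReal (Zcan f α ω) ∂(volume : Measure Ω) = nuM f α Set.univ := by
    rw [nuM, withDensity_apply _ MeasurableSet.univ, Measure.restrict_univ]
  rw [this, nuM_univ hf hα hα1, ENNReal.toReal_ofReal hα.le]

theorem Zcan_integrable : Integrable (Zcan f α) (volume : Measure Ω) := by
  refine (integrable_const (1:ℝ)).mono' (Zcan_meas hf hα hα1).aestronglyMeasurable ?_
  refine ae_of_all _ fun ω => ?_
  have h := Zcan_mem hf hα hα1 ω
  rw [Real.norm_eq_abs, abs_of_nonneg h.1]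
  exact h.2

include hfi

theorem f_nu_integrable : Integrable f (nuM f α) :=
  hfi.mono_measure (nuM_le hf hα hα1)

theorem QQ_integrableOn : IntegrableOn (QQ f α) (Set.Ioo 0 α) (volume : Measure ℝ) := by
  have h1 : Integrable id (((volume : Measure ℝ).restrict (Set.Ioo 0 α)).map (QQ f α)) := by
    rw [map_QQ_eq hf hα hα1]
    rw [integrable_map_measure aestronglyMeasurable_id hf.aemeasurable]
    exact f_nu_integrable hf hfi hα hα1
  rw [integrable_map_measure aestronglyMeasurable_id (QQ_meas hf hα hα1).aemeasurable] at h1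
  exact h1

theorem integral_QQ :
    ∫ β in Set.Ioo 0 α, QQ f α β ∂(volume : Measure ℝ) =
      ∫ ω, f ω * Zcan f α ω ∂(volume : Measure Ω) := by
  have h1 : ∫ β in Set.Ioo 0 α, QQ f α β ∂(volume : Measure ℝ) =
      ∫ y, id y ∂(((volume : Measure ℝ).restrict (Set.Ioo 0 α)).map (QQ f α)) := by
    rw [integral_map (QQ_meas hf hα hα1).aemeasurable aestronglyMeasurable_id]
    rfl
  rw [h1, map_QQ_eq hf hα hα1, integral_map hf.aemeasurable aestronglyMeasurable_id]
  have h2 : (nuM f α) = (volume : Measure Ω).withDensity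
      (fun ω => (Real.toNNReal (Zcan f α ω) : ℝ≥0∞)) := rfl
  show ∫ ω, f ω ∂(nuM f α) = _
  rw [h2, integral_withDensity_eq_integral_smul (Zcan_meas hf hα hα1).real_toNNReal]
  congr 1
  ext ω
  rw [NNReal.smul_def, Real.coe_toNNReal _ (Zcan_mem hf hα hα1 ω).1, smul_eq_mul, mul_comm]

theorem varF_integrableOn : IntegrableOn (varF f) (Set.Ioc 0 α) (volume : Measure ℝ) := by
  unfold IntegrableOn
  rw [← Measure.restrict_congr_set Ioo_ae_eq_Ioc]
  refine ((QQ_integrableOn hf hfi hα hα1).neg).congr ?_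
  filter_upwards [ae_restrict_mem measurableSet_Ioo] with β hβ
  simp only [Pi.neg_apply, varF_eq_neg_qf, QQ_eq hf hα hα1 hβ.1 hβ.2.le]

theorem integral_varF :
    ∫ β in Set.Ioc 0 α, varF f β ∂(volume : Measure ℝ) =
      ∫ ω, (-(f ω)) * Zcan f α ω ∂(volume : Measure Ω) := by
  rw [← setIntegral_congr_set Ioo_ae_eq_Ioc]
  have h1 : ∫ β in Set.Ioo 0 α, varF f β ∂(volume : Measure ℝ) =
      ∫ β in Set.Ioo 0 α, -(QQ f α β) ∂(volume : Measure ℝ) := by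
    refine integral_congr_ae ?_
    filter_upwards [ae_restrict_mem measurableSet_Ioo] with β hβ
    simp only [varF_eq_neg_qf, QQ_eq hf hα hα1 hβ.1 hβ.2.le]
  rw [h1, integral_neg, integral_QQ hf hfi hα hα1, ← integral_neg]
  congr 1
  ext ω
  ring

/-- Hardy–Littlewood step -/
theorem hl_le (Z' : Ω → ℝ) (hZm : Measurable Z') (hZb : ∀ ω, Z' ω ∈ Set.Icc (0:ℝ) 1)
    (hZi : ∫ ω, Z' ω ∂(volume : Measure Ω) = α) :
    ∫ ω, (-(f ω)) * Z' ω ∂(volume : Measure Ω) ≤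
      ∫ ω, (-(f ω)) * Zcan f α ω ∂(volume : Measure Ω) := by
  set v := qf f α with hv
  have hZ'i : Integrable Z' (volume : Measure Ω) := by
    refine (integrable_const (1:ℝ)).mono' hZm.aestronglyMeasurable ?_
    refine ae_of_all _ fun ω => ?_
    rw [Real.norm_eq_abs, abs_of_nonneg (hZb ω).1]
    exact (hZb ω).2
  have hZci := Zcan_integrable hf hα hα1
  have hfZ' : Integrable (fun ω => Z' ω * f ω) (volume : Measure Ω) :=
    hfi.bdd_mul hZm.aestronglyMeasurable
      (c := 1) (ae_of_all _ fun ω => by rw [Real.norm_eq_abs, abs_of_nonneg (hZb ω).1]; exact (hZb ω).2)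
  have hfZc : Integrable (fun ω => Zcan f α ω * f ω) (volume : Measure Ω) :=
    hfi.bdd_mul (Zcan_meas hf hα hα1).aestronglyMeasurable
      (c := 1) (ae_of_all _ fun ω => by
        rw [Real.norm_eq_abs, abs_of_nonneg (Zcan_mem hf hα hα1 ω).1]
        exact (Zcan_mem hf hα hα1 ω).2)
  have hpt : ∀ ω, (v - f ω) * (Z' ω - Zcan f α ω) ≤ 0 := by
    intro ω
    rcases lt_trichotomy (f ω) v with h | h | h
    · have hZc1 : Zcan f α ω = 1 := by unfold Zcan; rw [if_pos h]
      apply mul_nonpos_of_nonneg_of_nonpos (by linarith)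
      rw [hZc1]
      linarith [(hZb ω).2]
    · rw [h]; simp
    · have hZc0 : Zcan f α ω = 0 := by
        unfold Zcan
        rw [if_neg (by linarith), if_neg (by linarith)]
      apply mul_nonpos_of_nonpos_of_nonneg (by linarith)
      rw [hZc0]
      linarith [(hZb ω).1]
  have hexp : (fun ω => (v - f ω) * (Z' ω - Zcan f α ω)) =
      fun ω => (v * Z' ω - v * Zcan f α ω) - (Z' ω * f ω - Zcan f α ω * f ω) := by
    ext ω; ring
  have hint : ∫ ω, (v - f ω) * (Z' ω - Zcan f α ω) ∂(volume : Measure Ω) =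
      (v * α - v * α) - ((∫ ω, Z' ω * f ω ∂(volume : Measure Ω)) -
        ∫ ω, Zcan f α ω * f ω ∂(volume : Measure Ω)) := by
    have i1 : Integrable (fun ω => v * Z' ω - v * Zcan f α ω) (volume : Measure Ω) :=
      (hZ'i.const_mul v).sub (hZci.const_mul v)
    have i2 : Integrable (fun ω => Z' ω * f ω - Zcan f α ω * f ω) (volume : Measure Ω) :=
      hfZ'.sub hfZc
    rw [hexp, integral_sub i1 i2, integral_sub (hZ'i.const_mul v) (hZci.const_mul v),
      integral_sub hfZ' hfZc, integral_const_mul, integral_const_mul, hZi,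
      integral_Zcan hf hα hα1]
  have hle : ∫ ω, (v - f ω) * (Z' ω - Zcan f α ω) ∂(volume : Measure Ω) ≤ 0 :=
    integral_nonpos_of_ae (ae_of_all _ hpt)
  rw [hint] at hle
  have : (∫ ω, Zcan f α ω * f ω ∂(volume : Measure Ω)) ≤
      ∫ ω, Z' ω * f ω ∂(volume : Measure Ω) := by linarith
  calc ∫ ω, (-(f ω)) * Z' ω ∂(volume : Measure Ω)
      = -∫ ω, Z' ω * f ω ∂(volume : Measure Ω) := by
        rw [← integral_neg]; congr 1; ext ω; ring
  _ ≤ -∫ ω, Zcan f α ω * f ω ∂(volume : Measure Ω) := by linarith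
  _ = _ := by rw [← integral_neg]; congr 1; ext ω; ring

end Rep
variable {Ω : Type*} [MeasureSpace Ω] [IsProbabilityMeasure (volume : Measure Ω)]

/-- Value-at-Risk at level β. -/
noncomputable def VaR (p : ℝ≥0∞) [Fact (1 ≤ p)]
    (f : Lp ℝ p (volume : Measure Ω)) (β : ℝ) : ℝ :=
  sInf {m : ℝ | volume {ω | f ω + m < 0} ≤ ENNReal.ofReal β}

/-- Tail Value-at-Risk at level α. -/
noncomputable def TVaR (p : ℝ≥0∞) [Fact (1 ≤ p)] (α : ℝ)
    (f : Lp ℝ p (volume : Measure Ω)) : ℝ :=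
  (1 / α) * ∫ β in (0 : ℝ)..α, VaR p f β

section LpLevel
variable {p : ℝ≥0∞} [Fact (1 ≤ p)]
variable {α : ℝ} (hα : 0 < α) (hα1 : α < 1)

theorem var_eq_varF (X : Lp ℝ p (volume : Measure Ω)) (β : ℝ) :
    VaR p X β = varF (⇑X) β := rfl

theorem Xmeas (X : Lp ℝ p (volume : Measure Ω)) : Measurable (⇑X) :=
  (Lp.stronglyMeasurable X).measurable

theorem Xint (X : Lp ℝ p (volume : Measure Ω)) : Integrable (⇑X) (volume : Measure Ω) :=
  (Lp.memLp X).integrable Fact.out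

theorem adm_int_mul {g Z' : Ω → ℝ} (hgi : Integrable g (volume : Measure Ω))
    (hZm : Measurable Z') (hZb : ∀ ω, Z' ω ∈ Set.Icc (0:ℝ) 1) :
    Integrable (fun ω => -(g ω) * Z' ω) (volume : Measure Ω) := by
  have h := (hgi.neg).bdd_mul hZm.aestronglyMeasurable
    (c := 1) (ae_of_all _ fun ω => by rw [Real.norm_eq_abs, abs_of_nonneg (hZb ω).1]; exact (hZb ω).2)
  refine h.congr (ae_of_all _ fun ω => ?_)
  simp only [Pi.neg_apply]
  ring

include hα

theorem tvar_eq_Ioc (X : Lp ℝ p (volume : Measure Ω)) :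
    TVaR p α X = (1/α) * ∫ β in Set.Ioc (0:ℝ) α, varF (⇑X) β ∂(volume : Measure ℝ) := by
  rw [TVaR, intervalIntegral.integral_of_le hα.le]
  rfl

include hα1

theorem tvar_rep (X : Lp ℝ p (volume : Measure Ω)) :
    TVaR p α X = (1/α) * ∫ ω, (-(X ω)) * Zcan (⇑X) α ω ∂(volume : Measure Ω) := by
  rw [tvar_eq_Ioc hα X, integral_varF (Xmeas X) (Xint X) hα hα1]

theorem tvar_ge_adm (X : Lp ℝ p (volume : Measure Ω)) (Z' : Ω → ℝ) (hZm : Measurable Z')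
    (hZb : ∀ ω, Z' ω ∈ Set.Icc (0:ℝ) 1) (hZi : ∫ ω, Z' ω ∂(volume : Measure Ω) = α) :
    (1/α) * ∫ ω, (-(X ω)) * Z' ω ∂(volume : Measure Ω) ≤ TVaR p α X := by
  rw [tvar_rep hα hα1 X]
  have := hl_le (Xmeas X) (Xint X) hα hα1 Z' hZm hZb hZi
  apply mul_le_mul_of_nonneg_left this (by positivity)

theorem tvar_subadd (X Y : Lp ℝ p (volume : Measure Ω)) :
    TVaR p α (X + Y) ≤ TVaR p α X + TVaR p α Y := by
  set Z := Zcan (⇑(X + Y)) α with hZ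
  have hW := Xmeas (X + Y)
  have hZm : Measurable Z := Zcan_meas hW hα hα1
  have hZb : ∀ ω, Z ω ∈ Set.Icc (0:ℝ) 1 := Zcan_mem hW hα hα1
  have hZi : ∫ ω, Z ω ∂(volume : Measure Ω) = α := integral_Zcan hW hα hα1
  have hsplit : ∫ ω, (-((X + Y) ω)) * Z ω ∂(volume : Measure Ω) =
      (∫ ω, (-(X ω)) * Z ω ∂(volume : Measure Ω)) +
        ∫ ω, (-(Y ω)) * Z ω ∂(volume : Measure Ω) := by
    rw [← integral_add (adm_int_mul (Xint X) hZm hZb) (adm_int_mul (Xint Y) hZm hZb)]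
    refine integral_congr_ae ?_
    filter_upwards [Lp.coeFn_add X Y] with ω hω
    rw [hω]
    simp only [Pi.add_apply]
    ring
  rw [tvar_rep hα hα1 (X + Y), hsplit, mul_add]
  exact add_le_add (tvar_ge_adm hα hα1 X Z hZm hZb hZi) (tvar_ge_adm hα hα1 Y Z hZm hZb hZi)

theorem tvar_smul {c : ℝ} (hc : 0 ≤ c) (X : Lp ℝ p (volume : Measure Ω)) :
    TVaR p α (c • X) = c * TVaR p α X := by
  have hWm := Xmeas (c • X)
  have hZm : Measurable (Zcan (⇑(c • X)) α) := Zcan_meas hWm hα hα1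
  have hZb := Zcan_mem hWm hα hα1
  have hZi : ∫ ω, Zcan (⇑(c • X)) α ω ∂(volume : Measure Ω) = α := integral_Zcan hWm hα hα1
  have hXZm : Measurable (Zcan (⇑X) α) := Zcan_meas (Xmeas X) hα hα1
  have hXZb := Zcan_mem (Xmeas X) hα hα1
  have hXZi : ∫ ω, Zcan (⇑X) α ω ∂(volume : Measure Ω) = α := integral_Zcan (Xmeas X) hα hα1
  apply le_antisymm
  · rw [tvar_rep hα hα1 (c • X)]
    have h1 : ∫ ω, (-((c • X) ω)) * Zcan (⇑(c • X)) α ω ∂(volume : Measure Ω) =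
        c * ∫ ω, (-(X ω)) * Zcan (⇑(c • X)) α ω ∂(volume : Measure Ω) := by
      rw [← integral_const_mul]
      refine integral_congr_ae ?_
      filter_upwards [Lp.coeFn_smul c X] with ω hω
      rw [hω]
      simp only [Pi.smul_apply, smul_eq_mul]
      ring
    rw [h1]
    calc (1/α) * (c * ∫ ω, (-(X ω)) * Zcan (⇑(c • X)) α ω ∂(volume : Measure Ω))
        = c * ((1/α) * ∫ ω, (-(X ω)) * Zcan (⇑(c • X)) α ω ∂(volume : Measure Ω)) := by ring
    _ ≤ c * TVaR p α X :=
        mul_le_mul_of_nonneg_left (tvar_ge_adm hα hα1 X _ hZm hZb hZi) hc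
  · have h2 := tvar_ge_adm hα hα1 (c • X) (Zcan (⇑X) α) hXZm hXZb hXZi
    have h3 : ∫ ω, (-((c • X) ω)) * Zcan (⇑X) α ω ∂(volume : Measure Ω) =
        c * ∫ ω, (-(X ω)) * Zcan (⇑X) α ω ∂(volume : Measure Ω) := by
      rw [← integral_const_mul]
      refine integral_congr_ae ?_
      filter_upwards [Lp.coeFn_smul c X] with ω hω
      rw [hω]
      simp only [Pi.smul_apply, smul_eq_mul]
      ring
    rw [h3] at h2
    have h4 : c * TVaR p α X =
        (1/α) * (c * ∫ ω, (-(X ω)) * Zcan (⇑X) α ω ∂(volume : Measure Ω)) := by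
      rw [tvar_rep hα hα1 X]
      ring
    rw [h4]
    exact h2

theorem tvar_abs_bound (X : Lp ℝ p (volume : Measure Ω)) :
    |TVaR p α X| ≤ (1/α) * ∫ ω, |X ω| ∂(volume : Measure Ω) := by
  rw [tvar_rep hα hα1 X, abs_mul, abs_of_nonneg (show (0:ℝ) ≤ 1/α by positivity)]
  apply mul_le_mul_of_nonneg_left _ (show (0:ℝ) ≤ 1/α by positivity)
  have hZb := Zcan_mem (Xmeas X) hα hα1
  have h1 : |∫ ω, (-(X ω)) * Zcan (⇑X) α ω ∂(volume : Measure Ω)| ≤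
      ∫ ω, |(-(X ω)) * Zcan (⇑X) α ω| ∂(volume : Measure Ω) := by
    have := norm_integral_le_integral_norm (μ := (volume : Measure Ω))
      (f := fun ω => (-(X ω)) * Zcan (⇑X) α ω)
    simp only [Real.norm_eq_abs] at this
    exact this
  refine le_trans h1 ?_
  refine integral_mono (adm_int_mul (Xint X) (Zcan_meas (Xmeas X) hα hα1) hZb).abs
    (Xint X).abs ?_
  intro ω
  simp only
  rw [abs_mul, abs_neg]
  calc |X ω| * |Zcan (⇑X) α ω| ≤ |X ω| * 1 :=
    mul_le_mul_of_nonneg_left (by rw [abs_of_nonneg (hZb ω).1]; exact (hZb ω).2) (abs_nonneg _)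
  _ = |X ω| := mul_one _

end LpLevel
section Final
variable {p : ℝ≥0∞} [Fact (1 ≤ p)]
variable {α : ℝ} (hα : 0 < α) (hα1 : α < 1)

theorem intAbs_le_norm (X : Lp ℝ p (volume : Measure Ω)) :
    ∫ ω, |X ω| ∂(volume : Measure Ω) ≤ ‖X‖ := by
  have h1 : ∫ ω, |X ω| ∂(volume : Measure Ω) = ∫ ω, ‖X ω‖ ∂(volume : Measure Ω) := by
    simp [Real.norm_eq_abs]
  rw [h1, integral_norm_eq_lintegral_enorm (Lp.aestronglyMeasurable X), Lp.norm_def]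
  apply ENNReal.toReal_mono (Lp.eLpNorm_ne_top X)
  rw [← eLpNorm_one_eq_lintegral_enorm]
  exact eLpNorm_le_eLpNorm_of_exponent_le Fact.out (Lp.aestronglyMeasurable X)

theorem EST_pos {ST : Lp ℝ p (volume : Measure Ω)} (hST : 0 ≤ ST) (hne : ST ≠ 0) :
    0 < ∫ ω, ST ω ∂(volume : Measure Ω) := by
  rw [integral_pos_iff_support_of_nonneg_ae ((Lp.coeFn_nonneg ST).2 hST) (Xint ST)]
  by_contra h
  push_neg at h
  have h0 : volume (Function.support (⇑ST)) = 0 := le_antisymm h zero_le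
  have hae : ⇑ST =ᵐ[(volume : Measure Ω)] 0 := by
    have := (measure_eq_zero_iff_ae_notMem).1 h0
    filter_upwards [this] with ω hω
    exact Function.notMem_support.1 hω
  exact hne (Lp.eq_zero_iff_ae_eq_zero.2 hae)

include hα hα1

theorem tvar_neg_ge (ST : Lp ℝ p (volume : Measure Ω)) :
    ∫ ω, ST ω ∂(volume : Measure Ω) ≤ TVaR p α (-ST) := by
  have hadm := tvar_ge_adm hα hα1 (-ST) (fun _ => α) measurable_const
    (fun _ => ⟨hα.le, hα1.le⟩) (by simp)
  have hint : ∫ ω, (-((-ST) ω)) * α ∂(volume : Measure Ω) =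
      α * ∫ ω, ST ω ∂(volume : Measure Ω) := by
    rw [← integral_const_mul]
    refine integral_congr_ae ?_
    filter_upwards [Lp.coeFn_neg ST] with ω hω
    rw [hω]
    simp only [Pi.neg_apply]
    ring
  rw [hint] at hadm
  calc ∫ ω, ST ω ∂(volume : Measure Ω) = (1/α) * (α * ∫ ω, ST ω ∂(volume : Measure Ω)) := by
        field_simp
  _ ≤ TVaR p α (-ST) := hadm

theorem tvar_nonpos {ST : Lp ℝ p (volume : Measure Ω)} (hST : 0 ≤ ST) :
    TVaR p α ST ≤ 0 := by
  rw [tvar_rep hα hα1 ST]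
  apply mul_nonpos_of_nonneg_of_nonpos (by positivity)
  apply integral_nonpos_of_ae
  filter_upwards [(Lp.coeFn_nonneg ST).2 hST] with ω hω
  simp only [Pi.zero_apply] at hω
  exact mul_nonpos_of_nonpos_of_nonneg (by linarith) (Zcan_mem (Xmeas ST) hα hα1 ω).1

/-- admissible density supported on `{ST = 0}` when that set is large -/
theorem bigZero_adm {ST : Lp ℝ p (volume : Measure Ω)}
    (hnd : ENNReal.ofReal α ≤ volume {ω | ST ω = 0}) :
    ∃ Z' : Ω → ℝ, Measurable Z' ∧ (∀ ω, Z' ω ∈ Set.Icc (0:ℝ) 1) ∧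
      (∫ ω, Z' ω ∂(volume : Measure Ω) = α) ∧ (∀ ω, ST ω * Z' ω = 0) := by
  set m0t : ℝ := (volume {ω | ST ω = 0}).toReal with hm0t
  have hαm : α ≤ m0t := (ENNReal.ofReal_le_iff_le_toReal (measure_ne_top _ _)).1 hnd
  have hm0pos : 0 < m0t := lt_of_lt_of_le hα hαm
  refine ⟨fun ω => if ST ω = 0 then α / m0t else 0, ?_, ?_, ?_, ?_⟩
  · exact Measurable.ite (Eq_meas (Xmeas ST) 0) measurable_const measurable_const
  · intro ω
    by_cases h : ST ω = 0 <;> simp only [h, if_true, if_false]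
    · exact ⟨by positivity, by rw [div_le_one hm0pos]; exact hαm⟩
    · exact ⟨le_rfl, zero_le_one⟩
  · have hind : (fun ω => if ST ω = 0 then α / m0t else 0) =
        Set.indicator {ω | ST ω = 0} (fun _ => α / m0t) := by
      ext ω
      by_cases h : ST ω = 0 <;> simp [Set.indicator_apply, Set.mem_setOf_eq, h]
    rw [hind, integral_indicator_const _ (Eq_meas (Xmeas ST) 0), smul_eq_mul, measureReal_def, ← hm0t]
    field_simp
  · intro ω
    by_cases h : ST ω = 0 <;> simp [h]

theorem tvar_neg_iff {ST : Lp ℝ p (volume : Measure Ω)} (hST : 0 ≤ ST) (hne : ST ≠ 0) :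
    TVaR p α ST < 0 ↔ volume {ω | ST ω = 0} < ENNReal.ofReal α := by
  constructor
  · intro h
    by_contra hcon
    push_neg at hcon
    obtain ⟨Z', hZm, hZb, hZi, hZst⟩ := bigZero_adm hα hα1 hcon
    have hge := tvar_ge_adm hα hα1 ST Z' hZm hZb hZi
    have hzero : ∫ ω, (-(ST ω)) * Z' ω ∂(volume : Measure Ω) = 0 := by
      have : (fun ω => (-(ST ω)) * Z' ω) = fun _ => (0:ℝ) := by
        ext ω
        have := hZst ω
        nlinarith [hZst ω]
      rw [this, integral_zero]
    rw [hzero, mul_zero] at hge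
    linarith
  · intro hD
    have hSTae : ∀ᵐ ω ∂(volume : Measure Ω), 0 ≤ ST ω := by
      filter_upwards [(Lp.coeFn_nonneg ST).2 hST] with ω hω
      simpa using hω
    set Z := Zcan (⇑ST) α with hZdef
    have hZb := Zcan_mem (Xmeas ST) hα hα1
    have hZm := Zcan_meas (Xmeas ST) hα hα1
    have hZi := integral_Zcan (Xmeas ST) hα hα1
    have hJint : Integrable (fun ω => Z ω * ST ω) (volume : Measure Ω) :=
      (Xint ST).bdd_mul hZm.aestronglyMeasurable
        (c := 1) (ae_of_all _ fun ω => by rw [Real.norm_eq_abs, abs_of_nonneg (hZb ω).1]; exact (hZb ω).2)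
    have hJnn : 0 ≤ᵐ[(volume : Measure Ω)] fun ω => Z ω * ST ω := by
      filter_upwards [hSTae] with ω hω
      exact mul_nonneg (hZb ω).1 hω
    have hJpos : 0 < ∫ ω, Z ω * ST ω ∂(volume : Measure Ω) := by
      rcases lt_or_eq_of_le (integral_nonneg_of_ae hJnn) with h | h
      · exact h
      have hzae : (fun ω => Z ω * ST ω) =ᵐ[(volume : Measure Ω)] 0 :=
        (integral_eq_zero_iff_of_nonneg_ae hJnn hJint).1 h.symm
      exfalso
      have hbound : (fun ω => Z ω) ≤ᵐ[(volume : Measure Ω)]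
          Set.indicator {ω | ST ω = 0} (fun _ => (1:ℝ)) := by
        filter_upwards [hzae, hSTae] with ω h1 h2
        by_cases h : ST ω = 0
        · have : ω ∈ {ω | ST ω = 0} := h
          rw [Set.indicator_of_mem this]
          exact (hZb ω).2
        · have : ω ∉ {ω | ST ω = 0} := h
          rw [Set.indicator_of_notMem this]
          have : Z ω * ST ω = 0 := h1
          rcases mul_eq_zero.1 this with h' | h'
          · exact le_of_eq h'
          · exact absurd h' h
      have hile : α ≤ (volume {ω | ST ω = 0}).toReal := by
        calc α = ∫ ω, Z ω ∂(volume : Measure Ω) := hZi.symm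
        _ ≤ ∫ ω, Set.indicator {ω | ST ω = 0} (fun _ => (1:ℝ)) ω ∂(volume : Measure Ω) := by
            refine integral_mono_ae (by
              refine (integrable_const (1:ℝ)).mono' hZm.aestronglyMeasurable ?_
              exact ae_of_all _ fun ω => by
                rw [Real.norm_eq_abs, abs_of_nonneg (hZb ω).1]; exact (hZb ω).2)
              ((integrable_const (1:ℝ)).indicator (Eq_meas (Xmeas ST) 0)) hbound
        _ = (volume {ω | ST ω = 0}).toReal := by
            rw [integral_indicator_const _ (Eq_meas (Xmeas ST) 0), smul_eq_mul, mul_one, measureReal_def]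
      have hlt : (volume {ω | ST ω = 0}).toReal < α :=
        (ENNReal.lt_ofReal_iff_toReal_lt (measure_ne_top _ _)).1 hD
      linarith
    rw [tvar_rep hα hα1 ST]
    have hneg : ∫ ω, (-(ST ω)) * Z ω ∂(volume : Measure Ω) =
        -∫ ω, Z ω * ST ω ∂(volume : Measure Ω) := by
      rw [← integral_neg]
      congr 1
      ext ω
      ring
    rw [hneg]
    apply mul_neg_of_pos_of_neg (by positivity)
    linarith

end Final
/-- The TVaR acceptance set at level α. -/
noncomputable def tvarAcc (p : ℝ≥0∞) [Fact (1 ≤ p)] (α : ℝ) :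
    Set (Lp ℝ p (volume : Measure Ω)) :=
  {f | TVaR p α f ≤ 0}

/-- The risk measure ρ_{A,S}. -/
noncomputable def rho (p : ℝ≥0∞) [Fact (1 ≤ p)] (A : Set (Lp ℝ p (volume : Measure Ω)))
    (S0 : ℝ) (ST : Lp ℝ p (volume : Measure Ω)) (x : Lp ℝ p (volume : Measure Ω)) : EReal :=
  sInf ((fun r : ℝ => (r : EReal)) '' {r : ℝ | x + (r / S0) • ST ∈ A})

theorem ereal_sInf_image {S : Set ℝ} (hne : S.Nonempty) (hbdd : BddBelow S) :
    sInf ((fun r : ℝ => (r : EReal)) '' S) = ((sInf S : ℝ) : EReal) := by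
  apply le_antisymm
  · by_contra hcon
    push_neg at hcon
    obtain ⟨z, hz1, hz2⟩ := EReal.exists_between_coe_real hcon
    have hz1' : sInf S < z := by exact_mod_cast hz1
    obtain ⟨a, ha, haz⟩ := (csInf_lt_iff hbdd hne).1 hz1'
    have h1 : sInf ((fun r : ℝ => (r : EReal)) '' S) ≤ (a : EReal) := sInf_le ⟨a, ha, rfl⟩
    have h2 : (a : EReal) < (z : EReal) := by exact_mod_cast haz
    exact absurd (lt_of_le_of_lt (h1.trans h2.le) hz2) (lt_irrefl _)
  · apply le_sInf
    rintro y ⟨r, hr, rfl⟩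
    show ((sInf S : ℝ) : EReal) ≤ (r : EReal)
    exact_mod_cast csInf_le hbdd hr

section Main
variable {p : ℝ≥0∞} [Fact (1 ≤ p)]
variable {α : ℝ} (hα : 0 < α) (hα1 : α < 1)
variable {S0 : ℝ} (hS0 : 0 < S0)
variable {ST : Lp ℝ p (volume : Measure Ω)} (hST : 0 ≤ ST) (hSTne : ST ≠ 0)

include hα hα1

/-- with `TVaR ST < 0` the feasible set is nonempty -/
theorem feas_nonempty (hκ : TVaR p α ST < 0) (hS0 : 0 < S0)
    (x : Lp ℝ p (volume : Measure Ω)) :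
    ∃ r : ℝ, TVaR p α (x + (r / S0) • ST) ≤ 0 := by
  set κ := -TVaR p α ST with hκdef
  have hκpos : 0 < κ := by simp [hκdef]; linarith
  set c := max 0 (TVaR p α x / κ) with hc
  refine ⟨c * S0, ?_⟩
  rw [mul_div_cancel_right₀ c (ne_of_gt hS0)]
  calc TVaR p α (x + c • ST) ≤ TVaR p α x + TVaR p α (c • ST) := tvar_subadd hα hα1 x (c • ST)
  _ = TVaR p α x + c * TVaR p α ST := by rw [tvar_smul hα hα1 (le_max_left _ _) ST]
  _ = TVaR p α x - c * κ := by rw [hκdef]; ring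
  _ ≤ 0 := by
      have h1 : TVaR p α x / κ ≤ c := le_max_right _ _
      rw [div_le_iff₀ hκpos] at h1
      linarith

include hST hSTne

theorem feas_bddBelow (hS0 : 0 < S0) (x : Lp ℝ p (volume : Measure Ω)) :
    BddBelow {r : ℝ | TVaR p α (x + (r / S0) • ST) ≤ 0} := by
  set E' := TVaR p α (-ST) with hE'
  have hE'pos : 0 < E' := lt_of_lt_of_le (EST_pos hST hSTne) (tvar_neg_ge hα hα1 ST)
  set B := -(max 0 (TVaR p α (-x)) / E') with hB
  have hBnp : B ≤ 0 := by
    rw [hB, neg_nonpos]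
    positivity
  refine ⟨B * S0, fun r hr => ?_⟩
  simp only [Set.mem_setOf_eq] at hr
  set c := r / S0 with hcdef
  have hrc : r = c * S0 := by rw [hcdef]; field_simp
  have halg : (x + c • ST) + (-x) = c • ST := by abel
  have hsub : TVaR p α (c • ST) ≤ TVaR p α (x + c • ST) + TVaR p α (-x) := by
    have := tvar_subadd hα hα1 (x + c • ST) (-x)
    rwa [halg] at this
  have h2 : TVaR p α (c • ST) ≤ max 0 (TVaR p α (-x)) :=
    le_trans hsub (by
      have := le_max_right (0:ℝ) (TVaR p α (-x))
      linarith [le_max_right (0:ℝ) (TVaR p α (-x))])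
  have hcB : B ≤ c := by
    rcases le_or_gt 0 c with hc0 | hc0
    · linarith
    · have hmc : (0:ℝ) ≤ -c := by linarith
      have hcs : c • ST = (-c) • (-ST) := by rw [neg_smul_neg]
      rw [hcs, tvar_smul hα hα1 hmc (-ST)] at h2
      have : -c ≤ max 0 (TVaR p α (-x)) / E' := by
        rw [le_div_iff₀ hE'pos]
        exact h2
      rw [hB]
      linarith
  rw [hrc]
  exact mul_le_mul_of_nonneg_right hcB hS0.le

theorem rho_eq_real (hκ : TVaR p α ST < 0) (hS0 : 0 < S0)
    (x : Lp ℝ p (volume : Measure Ω)) :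
    rho p (tvarAcc (Ω := Ω) p α) S0 ST x =
      ((sInf {r : ℝ | TVaR p α (x + (r / S0) • ST) ≤ 0} : ℝ) : EReal) := by
  have hset : {r : ℝ | x + (r / S0) • ST ∈ tvarAcc (Ω := Ω) p α} =
      {r : ℝ | TVaR p α (x + (r / S0) • ST) ≤ 0} := rfl
  rw [rho, hset]
  obtain ⟨r0, hr0⟩ := feas_nonempty hα hα1 hκ hS0 x
  exact ereal_sInf_image ⟨r0, hr0⟩ (feas_bddBelow hα hα1 hST hSTne hS0 x)

theorem rfun_lip (hκ : TVaR p α ST < 0) (hS0 : 0 < S0)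
    (x y : Lp ℝ p (volume : Measure Ω)) :
    sInf {r : ℝ | TVaR p α (x + (r / S0) • ST) ≤ 0} ≤
      sInf {r : ℝ | TVaR p α (y + (r / S0) • ST) ≤ 0} + (S0 / (α * -TVaR p α ST)) * ‖x - y‖ := by
  set κ := -TVaR p α ST with hκdef
  have hκpos : 0 < κ := by simp [hκdef]; linarith
  set DD := (S0 / (α * κ)) * ‖x - y‖ with hDD
  have hDDnn : 0 ≤ DD := by positivity
  have key : ∀ c ∈ {r : ℝ | TVaR p α (y + (r / S0) • ST) ≤ 0},
      c + DD ∈ {r : ℝ | TVaR p α (x + (r / S0) • ST) ≤ 0} := by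
    intro c hc
    simp only [Set.mem_setOf_eq] at hc ⊢
    have halg : x + ((c + DD) / S0) • ST =
        ((y + (c / S0) • ST) + (x - y)) + (DD / S0) • ST := by
      rw [add_div, add_smul]
      abel
    rw [halg]
    have hT1 : TVaR p α (((y + (c / S0) • ST) + (x - y)) + (DD / S0) • ST) ≤
        TVaR p α ((y + (c / S0) • ST) + (x - y)) + TVaR p α ((DD / S0) • ST) :=
      tvar_subadd hα hα1 _ _
    have hT2 : TVaR p α ((y + (c / S0) • ST) + (x - y)) ≤
        TVaR p α (y + (c / S0) • ST) + TVaR p α (x - y) := tvar_subadd hα hα1 _ _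
    have hT3 : TVaR p α ((DD / S0) • ST) = (DD / S0) * TVaR p α ST :=
      tvar_smul hα hα1 (by positivity) ST
    have hT4 : TVaR p α (x - y) ≤ (1/α) * ‖x - y‖ := by
      calc TVaR p α (x - y) ≤ |TVaR p α (x - y)| := le_abs_self _
      _ ≤ (1/α) * ∫ ω, |(x - y) ω| ∂(volume : Measure Ω) := tvar_abs_bound hα hα1 (x - y)
      _ ≤ (1/α) * ‖x - y‖ :=
          mul_le_mul_of_nonneg_left (intAbs_le_norm (x - y)) (by positivity)
    have hfinal : TVaR p α (y + (c / S0) • ST) + TVaR p α (x - y) +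
        (DD / S0) * TVaR p α ST ≤ 0 := by
      have hTST : TVaR p α ST = -κ := by rw [hκdef]; ring
      rw [hTST]
      have hDDval : (DD / S0) * κ = (1/α) * ‖x - y‖ := by
        rw [hDD]
        field_simp
      have : (DD / S0) * -κ = -((1/α) * ‖x - y‖) := by
        rw [← hDDval]; ring
      rw [this]
      linarith
    calc TVaR p α (((y + (c / S0) • ST) + (x - y)) + (DD / S0) • ST)
        ≤ TVaR p α ((y + (c / S0) • ST) + (x - y)) + TVaR p α ((DD / S0) • ST) := hT1
    _ ≤ TVaR p α (y + (c / S0) • ST) + TVaR p α (x - y) + TVaR p α ((DD / S0) • ST) := by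
        linarith
    _ = TVaR p α (y + (c / S0) • ST) + TVaR p α (x - y) + (DD / S0) * TVaR p α ST := by
        rw [hT3]
    _ ≤ 0 := hfinal
  obtain ⟨r0, hr0⟩ := feas_nonempty hα hα1 hκ hS0 y
  have hr0' : r0 ∈ {r : ℝ | TVaR p α (y + (r / S0) • ST) ≤ 0} := hr0
  have hlb : ∀ c ∈ {r : ℝ | TVaR p α (y + (r / S0) • ST) ≤ 0},
      sInf {r : ℝ | TVaR p α (x + (r / S0) • ST) ≤ 0} - DD ≤ c := by
    intro c hc
    have := csInf_le (feas_bddBelow hα hα1 hST hSTne hS0 x) (key c hc)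
    linarith
  have := le_csInf ⟨r0, hr0'⟩ hlb
  rw [hDD] at this
  linarith

end Main
section Main2
variable {p : ℝ≥0∞} [Fact (1 ≤ p)]
variable {α : ℝ} (hα : 0 < α) (hα1 : α < 1)
variable {ST : Lp ℝ p (volume : Measure Ω)}

include hα hα1

theorem tvar_x0_ge (hnd : ENNReal.ofReal α ≤ volume {ω | ST ω = 0})
    (x₀ : Lp ℝ p (volume : Measure Ω))
    (hx₀ : ⇑x₀ =ᵐ[(volume : Measure Ω)] fun _ => (-1:ℝ)) (c : ℝ) :
    1 ≤ TVaR p α (x₀ + c • ST) := by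
  obtain ⟨Z', hZm, hZb, hZi, hZst⟩ := bigZero_adm hα hα1 hnd
  have hadm := tvar_ge_adm hα hα1 (x₀ + c • ST) Z' hZm hZb hZi
  have hint : ∫ ω, (-((x₀ + c • ST) ω)) * Z' ω ∂(volume : Measure Ω) =
      ∫ ω, Z' ω ∂(volume : Measure Ω) := by
    refine integral_congr_ae ?_
    filter_upwards [Lp.coeFn_add x₀ (c • ST), Lp.coeFn_smul c ST, hx₀] with ω h1 h2 h3
    have h3' : x₀ ω = -1 := h3
    rw [h1]
    simp only [Pi.add_apply]
    rw [h2]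
    simp only [Pi.smul_apply, smul_eq_mul]
    rw [h3']
    have h4 : ST ω * Z' ω = 0 := hZst ω
    linear_combination (-c) * h4
  rw [hint, hZi] at hadm
  have h5 : (1/α) * α = 1 := by field_simp
  rw [h5] at hadm
  exact hadm

theorem rho_top (hnd : ENNReal.ofReal α ≤ volume {ω | ST ω = 0}) {S0 : ℝ} (hS0 : 0 < S0)
    (x₀ : Lp ℝ p (volume : Measure Ω))
    (hx₀ : ⇑x₀ =ᵐ[(volume : Measure Ω)] fun _ => (-1:ℝ)) :
    rho p (tvarAcc (Ω := Ω) p α) S0 ST x₀ = ⊤ := by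
  have hempty : {r : ℝ | x₀ + (r / S0) • ST ∈ tvarAcc (Ω := Ω) p α} = ∅ := by
    ext r
    simp only [Set.mem_setOf_eq, Set.mem_empty_iff_false, iff_false]
    intro hmem
    have h1 : TVaR p α (x₀ + (r / S0) • ST) ≤ 0 := hmem
    have h2 := tvar_x0_ge hα hα1 hnd x₀ hx₀ (r / S0)
    linarith
  rw [rho, hempty, Set.image_empty, sInf_empty]

end Main2

/-- for the TVaR-based risk measure on Lᵖ (1 ≤ p < ∞) over a nonatomic
probability space, the following are equivalent: (a) finiteness, (b) Lipschitz
continuity, (c) TVaR_α(S_T) < 0, (d) P(S_T = 0) < α. -/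
theorem rho_tvarAcc_tfae (p : ℝ≥0∞) [Fact (1 ≤ p)] (hp : p ≠ ∞)
    (hna : ∀ s : Set Ω, MeasurableSet s → 0 < volume s →
      ∃ t ⊆ s, MeasurableSet t ∧ 0 < volume t ∧ volume t < volume s)
    (α : ℝ) (hα : α ∈ Set.Ioo (0 : ℝ) 1)
    (S0 : ℝ) (hS0 : 0 < S0)
    (ST : Lp ℝ p (volume : Measure Ω)) (hST : 0 ≤ ST) (hSTne : ST ≠ 0) :
    ((∀ x, rho p (tvarAcc (Ω := Ω) p α) S0 ST x ≠ ⊤ ∧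
        rho p (tvarAcc (Ω := Ω) p α) S0 ST x ≠ ⊥) ↔
      volume {ω | ST ω = 0} < ENNReal.ofReal α) ∧
    ((∃ (K : NNReal) (r : Lp ℝ p (volume : Measure Ω) → ℝ), LipschitzWith K r ∧
        ∀ x, rho p (tvarAcc (Ω := Ω) p α) S0 ST x = (r x : EReal)) ↔
      volume {ω | ST ω = 0} < ENNReal.ofReal α) ∧
    (TVaR p α ST < 0 ↔ volume {ω | ST ω = 0} < ENNReal.ofReal α) := by
  obtain ⟨hα0, hα1⟩ := hα
  have hpart3 : TVaR p α ST < 0 ↔ volume {ω | ST ω = 0} < ENNReal.ofReal α :=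
    tvar_neg_iff hα0 hα1 hST hSTne
  have hmem : MemLp (fun _ : Ω => (-1:ℝ)) p (volume : Measure Ω) := memLp_const _
  set x₀ : Lp ℝ p (volume : Measure Ω) := hmem.toLp _ with hx₀def
  have hx₀ : ⇑x₀ =ᵐ[(volume : Measure Ω)] fun _ => (-1:ℝ) := hmem.coeFn_toLp
  refine ⟨⟨?_, ?_⟩, ⟨?_, ?_⟩, hpart3⟩
  · -- finiteness → (d)
    intro h
    by_contra hnd
    push_neg at hnd
    exact (h x₀).1 (rho_top hα0 hα1 hnd hS0 x₀ hx₀)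
  · -- (d) → finiteness
    intro hD x
    have hκ := hpart3.2 hD
    rw [rho_eq_real hα0 hα1 hST hSTne hκ hS0 x]
    exact ⟨EReal.coe_ne_top _, EReal.coe_ne_bot _⟩
  · -- Lipschitz → (d)
    rintro ⟨K, r, hlip, heq⟩
    by_contra hnd
    push_neg at hnd
    have h1 := heq x₀
    rw [rho_top hα0 hα1 hnd hS0 x₀ hx₀] at h1
    exact EReal.coe_ne_top _ h1.symm
  · -- (d) → Lipschitz
    intro hD
    have hκ := hpart3.2 hD
    set κ := -TVaR p α ST with hκdef
    have hκpos : 0 < κ := by rw [hκdef]; linarith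
    refine ⟨Real.toNNReal (S0 / (α * κ)),
      fun x => sInf {r : ℝ | TVaR p α (x + (r / S0) • ST) ≤ 0}, ?_,
      fun x => rho_eq_real hα0 hα1 hST hSTne hκ hS0 x⟩
    apply LipschitzWith.of_dist_le_mul
    intro x y
    rw [Real.dist_eq, dist_eq_norm]
    have hcoe : ((Real.toNNReal (S0 / (α * κ))) : ℝ) = S0 / (α * κ) :=
      Real.coe_toNNReal _ (by positivity)
    rw [hcoe]
    have h1 := rfun_lip hα0 hα1 hST hSTne hκ hS0 x y
    have h2 := rfun_lip hα0 hα1 hST hSTne hκ hS0 y x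
    rw [norm_sub_rev] at h2
    rw [abs_sub_le_iff]
    rw [← hκdef] at h1 h2
    constructor <;> linarith
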